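/- Suppose (i) for every action a and aspect sequences ᾱ, β̄, if d(ᾱ,β̄) and a has aspect sequence β̄, then for all situations s, f_ᾱ(s) = f_ᾱ(a(s)); and (ii) for every fluent p and aspect sequence ᾱ, if p has aspect sequence ᾱ then there exists a predicate q on situations such that for all s, p(s) ↔ q(f_ᾱ(s)). Then the sequential non-interference axiom holds: for every fluent p, action a, and aspect sequences ᾱ, β̄, if p has aspect sequence ᾱ, a has aspect sequence β̄, and d(ᾱ,β̄), then the frame axiom F[a,p] holds. -/
import Mathlib

/-- `fSeq f αs` : the composition `f_{αₙ} ∘ ⋯ ∘ f_{α₁}` for the list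
`αs = (α₁, …, αₙ)`, with the empty list giving the identity function. -/
def fSeq {S A : Type*} (f : A → S → S) : List A → S → S
  | [], s => s
  | α :: rest, s => fSeq f rest (f α s)

/-- Sequential functional formalism: the sequential non-interference axiom
follows from the two axioms. -/
theorem seq_functional_noninterference
    {S A : Type*} (f : A → S → S) (d : List A → List A → Prop)
    (fluentAspect : (S → Prop) → List A → Prop)
    (actionAspect : (S → S) → List A → Prop)
    (h1 : ∀ (a : S → S) (αs βs : List A), d αs βs → actionAspect a βs →
      ∀ s : S, fSeq f αs s = fSeq f αs (a s))
    (h2 : ∀ (p : S → Prop) (αs : List A), fluentAspect p αs →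
      ∃ q : S → Prop, ∀ s : S, p s ↔ q (fSeq f αs s)) :
    ∀ (p : S → Prop) (a : S → S) (αs βs : List A),
      fluentAspect p αs → actionAspect a βs → d αs βs →
      ∀ s : S, p s ↔ p (a s) := by
  intro p a αs βs hp ha hd s
  obtain ⟨q, hq⟩ := h2 p αs hp
  rw [hq, hq, h1 a αs βs hd ha s]
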